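/- arXiv:2511.10592 — 5 statements merged into one kernel-verified Lean document; each statement's English description precedes it below -/
import Mathlib

section
/- For n ≥ 2k and i ∈ [k], a set F ∈ ([n] choose k) satisfies F ≤_LC Z_i if and only if |F ∩ [2i−1]| ≥ i, where Z_i := [i, 2i−1] ∪ [n−k+i+1, n]. Hence ⟨i⟩ = LC(Z_i), the set of all left-compressions of Z_i. -/
open Finset

/-- `G ≤_LC F`: both are `k`-sets and the increasing enumeration of `G` is
coordinatewise at most that of `F`. -/
def lcLE (k : ℕ) (G F : Finset ℕ) : Prop :=
  ∃ (hG : G.card = k) (hF : F.card = k),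
    ∀ i : Fin k, G.orderEmbOfFin hG i ≤ F.orderEmbOfFin hF i

/-- `([n] choose k)`: the `k`-element subsets of `[n] = {1,…,n}`. -/
def ground (n k : ℕ) : Finset (Finset ℕ) := (Finset.Icc 1 n).powersetCard k

/-- A family is intersecting if any two members meet. -/
def Intersecting' (𝓕 : Set (Finset ℕ)) : Prop := ∀ F ∈ 𝓕, ∀ G ∈ 𝓕, (F ∩ G).Nonempty

/-- A family of `k`-subsets of `[n]` closed under left-compressions. -/
def LeftCompressed (n k : ℕ) (𝓕 : Finset (Finset ℕ)) : Prop :=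
  𝓕 ⊆ ground n k ∧ ∀ F ∈ 𝓕, ∀ G ∈ ground n k, lcLE k G F → G ∈ 𝓕

/-- Maximal left-compressed intersecting family. -/
def MLCIF (n k : ℕ) (𝓕 : Finset (Finset ℕ)) : Prop :=
  LeftCompressed n k 𝓕 ∧ Intersecting' ↑𝓕 ∧
  ∀ 𝓖 : Finset (Finset ℕ), LeftCompressed n k 𝓖 → Intersecting' ↑𝓖 → 𝓕 ⊆ 𝓖 → 𝓕 = 𝓖

/-- The `i`-th canonical family `⟨i⟩`. -/
def canonical (n k i : ℕ) : Finset (Finset ℕ) :=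
  (ground n k).filter (fun F => i ≤ (F ∩ Finset.Icc 1 (2*i-1)).card)

/-- `Z_i = [i, 2i-1] ∪ [n-k+i+1, n]`. -/
def Zset (n k i : ℕ) : Finset ℕ :=
  Finset.Icc i (2*i-1) ∪ Finset.Icc (n-k+i+1) n

/-- `B` is a boundary set (`≤_LC`-maximal element) of `𝓕`. -/
def BoundaryIn (k : ℕ) (𝓕 : Finset (Finset ℕ)) (B : Finset ℕ) : Prop :=
  B ∈ 𝓕 ∧ ∀ F ∈ 𝓕, lcLE k B F → B = F

/-- A strictly monotone sequence in `ℕ` grows at least as fast as the index. -/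
lemma gap_lemma {k : ℕ} {f : Fin k → ℕ} (hf : StrictMono f) :
    ∀ a b : Fin k, a.val ≤ b.val → f a + (b.val - a.val) ≤ f b := by
  intro a b hab
  obtain ⟨d, hd⟩ := Nat.exists_eq_add_of_le hab
  induction d generalizing b with
  | zero =>
    have : a = b := Fin.ext (by omega)
    subst this; omega
  | succ d ih =>
    have hb' : a.val + d < k := by omega
    have h1 := ih ⟨a.val + d, hb'⟩ (by simp only [Fin.val_mk]; omega) rfl
    have h2 : f ⟨a.val + d, hb'⟩ < f b := hf (by rw [Fin.lt_def]; simp only [Fin.val_mk]; omega)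
    simp at h1
    omega

/-- If at least `j+1` elements of `F` are `≤ m`, then the `j`-th smallest element of `F`
is `≤ m`. -/
lemma key_lemma {k : ℕ} {F : Finset ℕ} (hF : F.card = k) (j : Fin k) (m : ℕ)
    (h : j.val < (F.filter (· ≤ m)).card) : F.orderEmbOfFin hF j ≤ m := by
  by_contra hc
  push_neg at hc
  have hsub : F.filter (· ≤ m) ⊆ (Finset.Iio j).image (F.orderEmbOfFin hF) := by
    intro x hx
    simp only [mem_filter] at hx
    obtain ⟨j', hj'⟩ : ∃ j', F.orderEmbOfFin hF j' = x := by
      have hr := Finset.range_orderEmbOfFin F hF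
      have : x ∈ Set.range (F.orderEmbOfFin hF) := by rw [hr]; exact_mod_cast hx.1
      exact this
    have hlt : j' < j := by
      by_contra hge
      push_neg at hge
      exact absurd ((F.orderEmbOfFin hF).strictMono.monotone hge) (by omega)
    exact mem_image.mpr ⟨j', by simpa using hlt, hj'⟩
  have := (card_le_card hsub).trans (card_image_le)
  rw [Fin.card_Iio] at this
  omega

/-- The increasing enumeration of `Zset n k i`. -/
def gfun (n k i : ℕ) : Fin k → ℕ :=
  fun j => if j.val < i then i + j.val else n - k + j.val + 1

lemma gfun_mono {n k i : ℕ} (h2 : i ≤ k) (h3 : 2*k ≤ n) :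
    StrictMono (gfun n k i) := by
  intro a b hab
  have hab' : a.val < b.val := hab
  have hbk : b.val < k := b.isLt
  unfold gfun
  split_ifs <;> omega

lemma gfun_mem {n k i : ℕ} (h1 : 1 ≤ i) (h2 : i ≤ k) (h3 : 2*k ≤ n) (j : Fin k) :
    gfun n k i j ∈ Zset n k i := by
  have hjk : j.val < k := j.isLt
  simp only [gfun, Zset, mem_union, mem_Icc]
  split_ifs with h
  · left; omega
  · right; omega

lemma Zcard {n k i : ℕ} (h1 : 1 ≤ i) (h2 : i ≤ k) (h3 : 2*k ≤ n) :
    (Zset n k i).card = k := by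
  have hdisj : Disjoint (Finset.Icc i (2*i-1)) (Finset.Icc (n-k+i+1) n) := by
    rw [Finset.disjoint_left]
    intro x hx hx'
    simp only [mem_Icc] at hx hx'
    omega
  rw [Zset, card_union_of_disjoint hdisj, Nat.card_Icc, Nat.card_Icc]
  omega

/-- `F ≤_LC Z_i ↔ |F ∩ [2i-1]| ≥ i`, hence `⟨i⟩ = LC(Z_i)`. -/
theorem stmt4 (n k i : ℕ) (hn : 2*k ≤ n) (hi : i ∈ Finset.Icc 1 k) :
    (∀ F ∈ ground n k, (lcLE k F (Zset n k i) ↔ i ≤ (F ∩ Finset.Icc 1 (2*i-1)).card)) ∧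
    ↑(canonical n k i) = {F : Finset ℕ | F ∈ ground n k ∧ lcLE k F (Zset n k i)} := by
  obtain ⟨h1i, hik⟩ := mem_Icc.mp hi
  have hZ : (Zset n k i).card = k := Zcard h1i hik hn
  have hg : gfun n k i = ⇑((Zset n k i).orderEmbOfFin hZ) :=
    Finset.orderEmbOfFin_unique hZ (gfun_mem h1i hik hn) (gfun_mono hik hn)
  have main : ∀ F ∈ ground n k,
      (lcLE k F (Zset n k i) ↔ i ≤ (F ∩ Finset.Icc 1 (2*i-1)).card) := by
    intro F hFg
    rw [ground, mem_powersetCard] at hFg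
    obtain ⟨hFsub, hFcard⟩ := hFg
    have he_mono : StrictMono ⇑(F.orderEmbOfFin hFcard) := (F.orderEmbOfFin hFcard).strictMono
    have he_mem : ∀ j, F.orderEmbOfFin hFcard j ∈ F := fun j => F.orderEmbOfFin_mem hFcard j
    have he_bound : ∀ j, 1 ≤ F.orderEmbOfFin hFcard j ∧ F.orderEmbOfFin hFcard j ≤ n :=
      fun j => mem_Icc.mp (hFsub (he_mem j))
    rw [lcLE]
    constructor
    · rintro ⟨hG, hZ', hle⟩
      have hle' : ∀ j : Fin k, F.orderEmbOfFin hFcard j ≤ gfun n k i j := by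
        intro j
        rw [hg]
        exact hle j
      have hcard : (univ : Finset (Fin i)).card ≤ (F ∩ Finset.Icc 1 (2*i-1)).card := by
        apply card_le_card_of_injOn
          (fun j => F.orderEmbOfFin hFcard ⟨j.val, lt_of_lt_of_le j.isLt hik⟩)
        · intro j _
          have hj : (j : ℕ) < i := j.isLt
          have hb := he_bound ⟨j.val, lt_of_lt_of_le j.isLt hik⟩
          have hl := hle' ⟨j.val, lt_of_lt_of_le j.isLt hik⟩
          simp only [gfun, Fin.val_mk, if_pos hj] at hl
          simp only [mem_inter, mem_Icc]
          exact Finset.mem_inter.mpr ⟨he_mem _, Finset.mem_Icc.mpr ⟨hb.1, by omega⟩⟩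
        · intro a _ b _ hab
          have := he_mono.injective hab
          have h' : (a : ℕ) = b := by simpa using congrArg Fin.val this
          exact Fin.ext h'
      simpa using hcard
    · intro h
      refine ⟨hFcard, hZ, ?_⟩
      intro j
      rw [← hg]
      have hfilter : i ≤ (F.filter (· ≤ 2*i-1)).card := by
        refine h.trans (card_le_card ?_)
        intro x hx
        simp only [mem_inter, mem_Icc] at hx
        simp only [mem_filter]
        exact ⟨hx.1, hx.2.2⟩
      have hik' : i - 1 < k := by omega
      have hlast : F.orderEmbOfFin hFcard ⟨i-1, hik'⟩ ≤ 2*i-1 :=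
        key_lemma hFcard ⟨i-1, hik'⟩ (2*i-1) (by simp only [Fin.val_mk]; omega)
      by_cases hcase : j.val < i
      · have hgap := gap_lemma he_mono j ⟨i-1, hik'⟩ (by simp only [Fin.val_mk]; omega)
        simp only [Fin.val_mk] at hgap
        simp only [gfun, if_pos hcase]
        omega
      · have hk1 : k - 1 < k := by omega
        have hgap := gap_lemma he_mono j ⟨k-1, hk1⟩ (by simp only [Fin.val_mk]; omega)
        have hb := (he_bound ⟨k-1, hk1⟩).2
        have hjk : j.val < k := j.isLt
        simp only [Fin.val_mk] at hgap
        simp only [gfun, if_neg hcase]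
        omega
  refine ⟨main, ?_⟩
  ext F
  simp only [canonical, coe_filter, Set.mem_setOf_eq]
  exact ⟨fun ⟨a, b⟩ => ⟨a, (main F a).mpr b⟩, fun ⟨a, b⟩ => ⟨a, (main F a).mp b⟩⟩
end

section
/- Let n ≥ 2k and let F ⊆ ([n] choose k) be a left-compressed intersecting family. Then every F ∈ F satisfies F ≤_LC Z_i for some i ∈ [k], where Z_i := [i, 2i−1] ∪ [n−k+i+1, n]. Equivalently, every F ∈ F satisfies |F ∩ [2i−1]| ≥ i for some i ∈ [k]. -/
open Finset

lemma gapLemma {k : ℕ} {f : Fin k → ℕ} (hf : StrictMono f) :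
    ∀ d (p q : Fin k), (q : ℕ) = (p : ℕ) + d → f p + d ≤ f q := by
  intro d
  induction d with
  | zero =>
    intro p q h
    have : p = q := Fin.ext (by omega)
    simp [this]
  | succ d ih =>
    intro p q h
    have hpd : (p : ℕ) + d < k := by have := q.isLt; omega
    have h1 := ih p ⟨(p : ℕ) + d, hpd⟩ rfl
    have h2 : f ⟨(p : ℕ) + d, hpd⟩ < f q := hf (by simp [Fin.lt_def]; omega)
    omega

lemma emb_le_of_card_filter {S : Finset ℕ} {m : ℕ} (hS : S.card = m) (i : Fin m) (x : ℕ)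
    (h : (i : ℕ) + 1 ≤ (S.filter (fun t => t ≤ x)).card) : S.orderEmbOfFin hS i ≤ x := by
  by_contra hc
  push_neg at hc
  have hsub : S.filter (fun t => t ≤ x) ⊆ (Finset.Iio i).image (S.orderEmbOfFin hS) := by
    intro t ht
    simp only [mem_filter] at ht
    have ht1 : t ∈ Set.range (S.orderEmbOfFin hS) := by
      rw [Finset.range_orderEmbOfFin]; exact ht.1
    obtain ⟨j, hj⟩ := ht1
    refine Finset.mem_image.2 ⟨j, ?_, hj⟩
    rw [Finset.mem_Iio]
    by_contra hji
    have hle := (S.orderEmbOfFin hS).monotone (le_of_not_gt hji)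
    rw [hj] at hle
    omega
  have h1 := Finset.card_le_card hsub
  have h2 := Finset.card_image_le (s := Finset.Iio i) (f := (S.orderEmbOfFin hS : Fin m → ℕ))
  have h3 : (Finset.Iio i).card = (i : ℕ) := by simp
  omega

/-- Every member of a left-compressed intersecting family is `≤_LC Z_i` for some `i ∈ [k]`. -/
theorem stmt6 (n k : ℕ) (hn : 2*k ≤ n) (𝓕 : Finset (Finset ℕ))
    (hlc : LeftCompressed n k 𝓕) (hint : Intersecting' ↑𝓕) :
    ∀ F ∈ 𝓕, ∃ i ∈ Finset.Icc 1 k, lcLE k F (Zset n k i) := by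
  intro F hF
  obtain ⟨hground, hclosed⟩ := hlc
  have hFg := hground hF
  rw [ground, Finset.mem_powersetCard] at hFg
  obtain ⟨hFsub, hFcard⟩ := hFg
  set a : Fin k → ℕ := fun j => F.orderEmbOfFin hFcard j with ha
  have hamono : StrictMono a := fun p q hpq => (F.orderEmbOfFin hFcard).strictMono hpq
  have hamem : ∀ j, a j ∈ F := fun j => Finset.orderEmbOfFin_mem F hFcard j
  -- Step 1: some index j satisfies a j ≤ 2j+1
  have step1 : ∃ j : Fin k, a j ≤ 2 * (j : ℕ) + 1 := by
    by_contra hno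
    push_neg at hno
    set C : Finset ℕ := Finset.Icc 1 n \ F with hCdef
    have hCcard : C.card = n - k := by
      rw [hCdef, card_sdiff_of_subset hFsub, Nat.card_Icc, hFcard]; omega
    have hkC : k ≤ n - k := by omega
    set b : Fin k → ℕ := fun j => C.orderEmbOfFin hCcard (Fin.castLE hkC j) with hb
    have hbmono : StrictMono b := fun p q hpq =>
      (C.orderEmbOfFin hCcard).strictMono (by rw [Fin.lt_def]; exact hpq)
    set G : Finset ℕ := Finset.image b Finset.univ with hG
    have hGcard : G.card = k := by
      rw [hG, Finset.card_image_of_injective _ hbmono.injective, card_univ, Fintype.card_fin]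
    have hGsubC : G ⊆ C := by
      intro x hx
      rw [hG, Finset.mem_image] at hx
      obtain ⟨j, _, hj⟩ := hx
      rw [← hj]; exact Finset.orderEmbOfFin_mem _ _ _
    have hGground : G ∈ ground n k := by
      rw [ground, Finset.mem_powersetCard]
      exact ⟨fun x hx => (Finset.mem_sdiff.1 (hGsubC hx)).1, hGcard⟩
    have hGemb : (fun j : Fin k => b j) = ⇑(G.orderEmbOfFin hGcard) :=
      Finset.orderEmbOfFin_unique hGcard
        (fun j => by rw [hG]; exact Finset.mem_image_of_mem _ (mem_univ j)) hbmono
    have hble : ∀ j : Fin k, b j ≤ a j := by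
      intro j
      apply emb_le_of_card_filter
      have hajn : a j ≤ n := (Finset.mem_Icc.1 (hFsub (hamem j))).2
      have haj1 : 1 ≤ a j := (Finset.mem_Icc.1 (hFsub (hamem j))).1
      -- at most j+1 elements of F are ≤ a j
      have hFcount : (F.filter (fun t => t ≤ a j)).card ≤ (j : ℕ) + 1 := by
        have hsub2 : F.filter (fun t => t ≤ a j) ⊆ (Finset.Iic j).image a := by
          intro t ht
          simp only [mem_filter] at ht
          have ht1 : t ∈ Set.range (F.orderEmbOfFin hFcard) := by
            rw [Finset.range_orderEmbOfFin]; exact ht.1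
          obtain ⟨p, hp⟩ := ht1
          refine Finset.mem_image.2 ⟨p, ?_, hp⟩
          rw [Finset.mem_Iic]
          by_contra hpj
          have hlt := (F.orderEmbOfFin hFcard).strictMono (lt_of_not_ge hpj)
          rw [hp] at hlt
          have : a j < t := hlt
          omega
        have h1 := Finset.card_le_card hsub2
        have h2 := Finset.card_image_le (s := Finset.Iic j) (f := a)
        have h3 : (Finset.Iic j).card = (j : ℕ) + 1 := by simp
        omega
      -- the filter of F below a j sits inside Icc 1 (a j)
      have hFfsub : F.filter (fun t => t ≤ a j) ⊆ Finset.Icc 1 (a j) := by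
        intro t ht
        simp only [mem_filter] at ht
        exact Finset.mem_Icc.2 ⟨(Finset.mem_Icc.1 (hFsub ht.1)).1, ht.2⟩
      have hDcard : (Finset.Icc 1 (a j) \ F.filter (fun t => t ≤ a j)).card
          = a j - (F.filter (fun t => t ≤ a j)).card := by
        rw [card_sdiff_of_subset hFfsub, Nat.card_Icc]; omega
      have hDsub : Finset.Icc 1 (a j) \ F.filter (fun t => t ≤ a j)
          ⊆ C.filter (fun t => t ≤ a j) := by
        intro x hx
        rw [Finset.mem_sdiff] at hx
        have hx1 := Finset.mem_Icc.1 hx.1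
        have hxF : x ∉ F := by
          intro hxF
          exact hx.2 (Finset.mem_filter.2 ⟨hxF, hx1.2⟩)
        refine Finset.mem_filter.2 ⟨?_, hx1.2⟩
        rw [hCdef, Finset.mem_sdiff]
        exact ⟨Finset.mem_Icc.2 ⟨hx1.1, le_trans hx1.2 hajn⟩, hxF⟩
      have hCfcard := Finset.card_le_card hDsub
      have hnoj := hno j
      have : (Fin.castLE hkC j : ℕ) = (j : ℕ) := rfl
      omega
    have hlcGF : lcLE k G F :=
      ⟨hGcard, hFcard, fun j => by rw [← congrFun hGemb j]; exact hble j⟩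
    have hGmem : G ∈ 𝓕 := hclosed F hF G hGground hlcGF
    have hne := hint F (Finset.mem_coe.2 hF) G (Finset.mem_coe.2 hGmem)
    obtain ⟨x, hx⟩ := hne
    rw [Finset.mem_inter] at hx
    exact (Finset.mem_sdiff.1 (hGsubC hx.2)).2 hx.1
  obtain ⟨j0, hj0⟩ := step1
  have hj0k := j0.isLt
  set i : ℕ := (j0 : ℕ) + 1 with hi
  refine ⟨i, Finset.mem_Icc.2 ⟨by omega, by omega⟩, ?_⟩
  -- the explicit enumeration of Zset
  set z : Fin k → ℕ := fun j => if (j : ℕ) < i then i + j else n - k + 1 + j with hz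
  have hzmono : StrictMono z := by
    intro p q hpq
    have hpq' : (p : ℕ) < q := hpq
    have hp := p.isLt
    have hq := q.isLt
    simp only [hz]
    split <;> split <;> omega
  have hzmem : ∀ j : Fin k, z j ∈ Zset n k i := by
    intro j
    have hjk := j.isLt
    rw [Zset, Finset.mem_union]
    simp only [hz]
    rcases lt_or_ge (j : ℕ) i with h | h
    · rw [if_pos h]
      exact Or.inl (Finset.mem_Icc.2 ⟨by omega, by omega⟩)
    · rw [if_neg (not_lt.2 h)]
      exact Or.inr (Finset.mem_Icc.2 ⟨by omega, by omega⟩)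
  have hdisj : Disjoint (Finset.Icc i (2*i-1)) (Finset.Icc (n-k+i+1) n) := by
    rw [Finset.disjoint_left]
    intro x hx1 hx2
    rw [Finset.mem_Icc] at hx1 hx2
    omega
  have hZcard : (Zset n k i).card = k := by
    rw [Zset, Finset.card_union_of_disjoint hdisj, Nat.card_Icc, Nat.card_Icc]
    omega
  have hZemb : z = ⇑((Zset n k i).orderEmbOfFin hZcard) :=
    Finset.orderEmbOfFin_unique hZcard hzmem hzmono
  refine ⟨hFcard, hZcard, fun j => ?_⟩
  rw [← congrFun hZemb j]
  have hjk := j.isLt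
  show a j ≤ z j
  simp only [hz]
  rcases lt_or_ge (j : ℕ) i with h | h
  · -- j ≤ j0 : use the gap up to j0
    rw [if_pos h]
    have hgap := gapLemma hamono ((j0 : ℕ) - (j : ℕ)) j j0 (by omega)
    omega
  · -- j ≥ i : use the gap up to the last index
    rw [if_neg (not_lt.2 h)]
    have hlast : k - 1 < k := by omega
    have hlastv : ((⟨k - 1, hlast⟩ : Fin k) : ℕ) = k - 1 := rfl
    have hgap := gapLemma hamono ((k - 1) - (j : ℕ)) j ⟨k - 1, hlast⟩ (by rw [hlastv]; omega)
    have hlastn : a ⟨k - 1, hlast⟩ ≤ n := (Finset.mem_Icc.1 (hFsub (hamem ⟨k - 1, hlast⟩))).2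
    omega
end

section
/- Let n ≥ 2k and let F ⊆ ([n] choose k) be a maximal left-compressed intersecting family (MLCIF). If F has exactly one ≤_LC-maximal element, then F = ⟨i⟩ for some i ∈ [k], where ⟨i⟩ := { F ∈ ([n] choose k) : |F ∩ [2i−1]| ≥ i }. -/
open Finset

lemma image_univ_emb {F : Finset ℕ} {k : ℕ} (hF : F.card = k) :
    Finset.image (F.orderEmbOfFin hF) Finset.univ = F := by
  ext x
  simp only [Finset.mem_image, Finset.mem_univ, true_and]
  constructor
  · rintro ⟨i, rfl⟩; exact Finset.orderEmbOfFin_mem F hF i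
  · intro hx
    have : x ∈ Set.range (F.orderEmbOfFin hF) := by
      rw [Finset.range_orderEmbOfFin]; exact hx
    exact this

lemma sum_emb {F : Finset ℕ} {k : ℕ} (hF : F.card = k) :
    ∑ i : Fin k, F.orderEmbOfFin hF i = ∑ x ∈ F, x := by
  calc ∑ i : Fin k, F.orderEmbOfFin hF i
      = ∑ x ∈ Finset.image (F.orderEmbOfFin hF) Finset.univ, x :=
        (Finset.sum_image (g := ⇑(F.orderEmbOfFin hF)) (f := fun x => x)
          (fun a _ b _ hab => (F.orderEmbOfFin hF).injective hab)).symm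
    _ = ∑ x ∈ F, x := by rw [image_univ_emb hF]

lemma eq_of_emb_eq {G F : Finset ℕ} {k : ℕ} (hG : G.card = k) (hF : F.card = k)
    (h : ∀ i, G.orderEmbOfFin hG i = F.orderEmbOfFin hF i) : G = F := by
  rw [← image_univ_emb hG, ← image_univ_emb hF]
  exact Finset.image_congr (fun i _ => h i)

lemma lcLE_antisymm_of_sum {G F : Finset ℕ} {k : ℕ} (h : lcLE k G F)
    (hsum : ∑ x ∈ F, x ≤ ∑ x ∈ G, x) : G = F := by
  obtain ⟨hG, hF, hle⟩ := h
  refine eq_of_emb_eq hG hF (fun i => ?_)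
  by_contra hne
  have hlt : G.orderEmbOfFin hG i < F.orderEmbOfFin hF i := lt_of_le_of_ne (hle i) hne
  have : ∑ j : Fin k, G.orderEmbOfFin hG j < ∑ j : Fin k, F.orderEmbOfFin hF j :=
    Finset.sum_lt_sum (fun j _ => hle j) ⟨i, Finset.mem_univ i, hlt⟩
  rw [sum_emb hG, sum_emb hF] at this
  omega

lemma lcLE_refl {F : Finset ℕ} {k : ℕ} (hF : F.card = k) : lcLE k F F :=
  ⟨hF, hF, fun _ => le_rfl⟩

lemma lcLE_trans {F G H : Finset ℕ} {k : ℕ} (h1 : lcLE k F G) (h2 : lcLE k G H) :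
    lcLE k F H := by
  obtain ⟨hF, hG, hle1⟩ := h1
  obtain ⟨hG', hH, hle2⟩ := h2
  exact ⟨hF, hH, fun i => le_trans (hle1 i) (hle2 i)⟩

lemma emb_le_iff_card_filter {F : Finset ℕ} {k : ℕ} (hF : F.card = k) (j : Fin k) (m : ℕ) :
    F.orderEmbOfFin hF j ≤ m ↔ (j : ℕ) + 1 ≤ (F.filter (· ≤ m)).card := by
  constructor
  · intro hle
    have hsub : Finset.image (F.orderEmbOfFin hF) (Finset.Iic j) ⊆ F.filter (· ≤ m) := by
      intro x hx
      obtain ⟨i, hi, rfl⟩ := Finset.mem_image.1 hx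
      refine Finset.mem_filter.2 ⟨Finset.orderEmbOfFin_mem F hF i, ?_⟩
      exact le_trans ((F.orderEmbOfFin hF).monotone (Finset.mem_Iic.1 hi)) hle
    calc (j : ℕ) + 1 = (Finset.Iic j).card := (Fin.card_Iic j).symm
      _ = (Finset.image (F.orderEmbOfFin hF) (Finset.Iic j)).card :=
          (Finset.card_image_of_injective _ (F.orderEmbOfFin hF).injective).symm
      _ ≤ _ := Finset.card_le_card hsub
  · intro hcard
    by_contra hlt
    push_neg at hlt
    have hsub : F.filter (· ≤ m) ⊆ Finset.image (F.orderEmbOfFin hF) (Finset.Iio j) := by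
      intro x hx
      obtain ⟨hxF, hxm⟩ := Finset.mem_filter.1 hx
      have : x ∈ Set.range (F.orderEmbOfFin hF) := by
        rw [Finset.range_orderEmbOfFin]; exact hxF
      obtain ⟨i, rfl⟩ := this
      refine Finset.mem_image.2 ⟨i, Finset.mem_Iio.2 ?_, rfl⟩
      have : F.orderEmbOfFin hF i < F.orderEmbOfFin hF j := lt_of_le_of_lt hxm hlt
      exact (F.orderEmbOfFin hF).strictMono.lt_iff_lt.1 this
    have := Finset.card_le_card hsub
    rw [Finset.card_image_of_injective _ (F.orderEmbOfFin hF).injective, Fin.card_Iio] at this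
    omega

lemma mem_ground {n k : ℕ} {F : Finset ℕ} :
    F ∈ ground n k ↔ F ⊆ Finset.Icc 1 n ∧ F.card = k := Finset.mem_powersetCard

lemma inter_Icc_eq_filter {n m : ℕ} {F : Finset ℕ} (hsub : F ⊆ Finset.Icc 1 n) :
    F ∩ Finset.Icc 1 m = F.filter (· ≤ m) := by
  ext x
  simp only [Finset.mem_inter, Finset.mem_filter, Finset.mem_Icc]
  constructor
  · rintro ⟨h1, _, h2⟩; exact ⟨h1, h2⟩
  · rintro ⟨h1, h2⟩
    have := Finset.mem_Icc.1 (hsub h1)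
    exact ⟨h1, this.1, h2⟩

lemma mem_canonical_iff {n k : ℕ} {F : Finset ℕ} (hF : F.card = k)
    (hsub : F ⊆ Finset.Icc 1 n) (j : Fin k) :
    F ∈ canonical n k ((j:ℕ)+1) ↔ F.orderEmbOfFin hF j ≤ 2*(j:ℕ)+1 := by
  have hg : F ∈ ground n k := mem_ground.2 ⟨hsub, hF⟩
  have h21 : 2*((j:ℕ)+1)-1 = 2*(j:ℕ)+1 := by omega
  rw [canonical, Finset.mem_filter, h21, inter_Icc_eq_filter hsub,
      emb_le_iff_card_filter hF j (2*(j:ℕ)+1)]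
  tauto

lemma le_unique_boundary {k : ℕ} {𝓕 : Finset (Finset ℕ)} {B F : Finset ℕ}
    (hB : ∀ M, BoundaryIn k 𝓕 M → M = B) (hF : F ∈ 𝓕) (hFk : F.card = k) :
    lcLE k F B := by
  classical
  set S := 𝓕.filter (fun M => lcLE k F M) with hS
  have hFS : F ∈ S := Finset.mem_filter.2 ⟨hF, lcLE_refl hFk⟩
  obtain ⟨M, hMS, hMmax⟩ := Finset.exists_max_image S (fun M => ∑ x ∈ M, x) ⟨F, hFS⟩
  obtain ⟨hM𝓕, hFM⟩ := Finset.mem_filter.1 hMS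
  have hbd : BoundaryIn k 𝓕 M := by
    refine ⟨hM𝓕, fun F' hF' hMF' => ?_⟩
    have hFF' : lcLE k F F' := lcLE_trans hFM hMF'
    have hF'S : F' ∈ S := Finset.mem_filter.2 ⟨hF', hFF'⟩
    exact lcLE_antisymm_of_sum hMF' (hMmax F' hF'S)
  rw [hB M hbd] at hFM
  exact hFM

/-- An MLCIF with a unique boundary set is canonical. -/
theorem stmt7 (n k : ℕ) (hn : 2*k ≤ n) (𝓕 : Finset (Finset ℕ)) (h : MLCIF n k 𝓕)
    (huniq : ∃! B, BoundaryIn k 𝓕 B) :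
    ∃ i ∈ Finset.Icc 1 k, 𝓕 = canonical n k i := by
  classical
  obtain ⟨⟨hsub, hcl⟩, hint, hmax⟩ := h
  obtain ⟨B, hBbd, hBuniq⟩ := huniq
  have hB𝓕 : B ∈ 𝓕 := hBbd.1
  obtain ⟨hBsub, hBk⟩ := mem_ground.1 (hsub hB𝓕)
  -- k = 0 is impossible
  rcases Nat.eq_zero_or_pos k with hk0 | hkpos
  · exfalso
    have hne : (B ∩ B).Nonempty := hint B hB𝓕 B hB𝓕
    rw [Finset.inter_self] at hne
    have := Finset.card_pos.2 hne
    omega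
  -- every member is below B
  have hleB : ∀ F ∈ 𝓕, lcLE k F B := fun F hF =>
    le_unique_boundary (fun M hM => hBuniq M hM) hF (mem_ground.1 (hsub hF)).2
  -- there is j with b_j ≤ 2j+1
  have hexj : ∃ j : Fin k, B.orderEmbOfFin hBk j ≤ 2*(j:ℕ)+1 := by
    by_contra hcon
    push_neg at hcon
    set fE : Fin k → ℕ := fun i => 2*(i:ℕ)+2 with hfE
    set fO : Fin k → ℕ := fun i => 2*(i:ℕ)+1 with hfO
    have hmE : StrictMono fE := fun a b hab => by
      have : (a:ℕ) < b := hab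
      simp only [hfE]; omega
    have hmO : StrictMono fO := fun a b hab => by
      have : (a:ℕ) < b := hab
      simp only [hfO]; omega
    set E := Finset.image fE Finset.univ with hE
    set O := Finset.image fO Finset.univ with hO
    have hEk : E.card = k := by
      rw [hE, Finset.card_image_of_injective _ hmE.injective, Finset.card_univ,
        Fintype.card_fin]
    have hOk : O.card = k := by
      rw [hO, Finset.card_image_of_injective _ hmO.injective, Finset.card_univ,
        Fintype.card_fin]
    have hEsub : E ⊆ Finset.Icc 1 n := by
      intro x hx
      obtain ⟨i, -, rfl⟩ := Finset.mem_image.1 hx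
      have := i.isLt
      simp only [hfE, Finset.mem_Icc]
      omega
    have hOsub : O ⊆ Finset.Icc 1 n := by
      intro x hx
      obtain ⟨i, -, rfl⟩ := Finset.mem_image.1 hx
      have := i.isLt
      simp only [hfO, Finset.mem_Icc]
      omega
    have hEemb : ∀ i, E.orderEmbOfFin hEk i = fE i := by
      intro i
      rw [← Finset.orderEmbOfFin_unique hEk
        (fun x => Finset.mem_image.2 ⟨x, Finset.mem_univ x, rfl⟩) hmE]
    have hOemb : ∀ i, O.orderEmbOfFin hOk i = fO i := by
      intro i
      rw [← Finset.orderEmbOfFin_unique hOk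
        (fun x => Finset.mem_image.2 ⟨x, Finset.mem_univ x, rfl⟩) hmO]
    have hlcE : lcLE k E B := ⟨hEk, hBk, fun i => by
      rw [hEemb i]; have := hcon i; simp only [hfE]; omega⟩
    have hlcO : lcLE k O B := ⟨hOk, hBk, fun i => by
      rw [hOemb i]; have := hcon i; simp only [hfO]; omega⟩
    have hE𝓕 : E ∈ 𝓕 := hcl B hB𝓕 E (mem_ground.2 ⟨hEsub, hEk⟩) hlcE
    have hO𝓕 : O ∈ 𝓕 := hcl B hB𝓕 O (mem_ground.2 ⟨hOsub, hOk⟩) hlcO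
    obtain ⟨x, hx⟩ := hint E hE𝓕 O hO𝓕
    rw [Finset.mem_inter] at hx
    obtain ⟨i, -, hxE⟩ := Finset.mem_image.1 hx.1
    obtain ⟨i', -, hxO⟩ := Finset.mem_image.1 hx.2
    simp only [hfE] at hxE
    simp only [hfO] at hxO
    omega
  obtain ⟨j, hj⟩ := hexj
  refine ⟨(j:ℕ)+1, Finset.mem_Icc.2 ⟨by omega, by have := j.isLt; omega⟩, ?_⟩
  apply hmax
  · -- LeftCompressed
    refine ⟨Finset.filter_subset _ _, fun F hF G hGg hGF => ?_⟩
    have hFg : F ∈ ground n k := Finset.filter_subset _ _ hF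
    obtain ⟨hFsub, hFk⟩ := mem_ground.1 hFg
    obtain ⟨hGsub, hGk⟩ := mem_ground.1 hGg
    obtain ⟨hGk', hFk', hle⟩ := hGF
    have hFj : F.orderEmbOfFin hFk j ≤ 2*(j:ℕ)+1 :=
      (mem_canonical_iff hFk hFsub j).1 hF
    refine (mem_canonical_iff hGk hGsub j).2 ?_
    exact le_trans (hle j) hFj
  · -- Intersecting
    intro F hF G hG
    rw [Finset.mem_coe] at hF hG
    have hFc := (Finset.mem_filter.1 hF).2
    have hGc := (Finset.mem_filter.1 hG).2
    by_contra hcon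
    rw [Finset.not_nonempty_iff_eq_empty] at hcon
    have hdis : Disjoint F G := Finset.disjoint_iff_inter_eq_empty.2 hcon
    set I := Finset.Icc 1 (2*((j:ℕ)+1)-1) with hI
    have hdis2 : Disjoint (F ∩ I) (G ∩ I) :=
      hdis.mono Finset.inter_subset_left Finset.inter_subset_left
    have hunion : (F ∩ I) ∪ (G ∩ I) ⊆ I :=
      Finset.union_subset Finset.inter_subset_right Finset.inter_subset_right
    have hcard := Finset.card_le_card hunion
    rw [Finset.card_union_of_disjoint hdis2] at hcard
    have hIcard : I.card = 2*(j:ℕ)+1 := by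
      rw [hI, Nat.card_Icc]; omega
    omega
  · -- 𝓕 ⊆ canonical
    intro F hF
    obtain ⟨hFsub, hFk⟩ := mem_ground.1 (hsub hF)
    obtain ⟨hFk', hBk', hle⟩ := hleB F hF
    refine (mem_canonical_iff hFk hFsub j).2 ?_
    exact le_trans (hle j) hj
end

section
/- Let k be even and let G ⊆ ([2k] choose k) consist of exactly one set from each complementary pair {F, F^c} with Σ(F) = Σ(F^c) = (k/2)(2k+1). Then the downward closure G^≤ := ∪_{G ∈ G} LC(G) is an intersecting family. -/
open Finset

lemma image_orderEmbOfFin' {k : ℕ} (H : Finset ℕ) (h : H.card = k) :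
    Finset.image (H.orderEmbOfFin h) Finset.univ = H := by
  apply Finset.coe_injective
  rw [Finset.coe_image, Finset.coe_univ, Set.image_univ, Finset.range_orderEmbOfFin]

lemma sum_eq_sum_emb' {k : ℕ} (H : Finset ℕ) (h : H.card = k) :
    ∑ x ∈ H, x = ∑ i : Fin k, H.orderEmbOfFin h i := by
  conv_lhs => rw [← image_orderEmbOfFin' H h]
  rw [Finset.sum_image]
  intro a _ b _ hab
  exact (H.orderEmbOfFin h).injective hab

lemma lc_sum_le' {k : ℕ} {H G : Finset ℕ} (h : lcLE k H G) :
    ∑ x ∈ H, x ≤ ∑ x ∈ G, x := by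
  obtain ⟨hH, hG, hle⟩ := h
  rw [sum_eq_sum_emb' H hH, sum_eq_sum_emb' G hG]
  exact Finset.sum_le_sum fun i _ => hle i

lemma lc_eq_of_sum_le' {k : ℕ} {H G : Finset ℕ} (h : lcLE k H G)
    (hs : ∑ x ∈ G, x ≤ ∑ x ∈ H, x) : H = G := by
  obtain ⟨hH, hG, hle⟩ := h
  have hpt : ∀ i : Fin k, H.orderEmbOfFin hH i = G.orderEmbOfFin hG i := by
    by_contra hc
    push_neg at hc
    obtain ⟨j, hj⟩ := hc
    have hlt : ∑ i : Fin k, H.orderEmbOfFin hH i < ∑ i : Fin k, G.orderEmbOfFin hG i :=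
      Finset.sum_lt_sum (fun i _ => hle i) ⟨j, Finset.mem_univ j, lt_of_le_of_ne (hle j) hj⟩
    rw [← sum_eq_sum_emb' H hH, ← sum_eq_sum_emb' G hG] at hlt
    omega
  rw [← image_orderEmbOfFin' H hH, ← image_orderEmbOfFin' G hG]
  exact Finset.image_congr fun i _ => hpt i

lemma gauss_icc' (k : ℕ) : (∑ x ∈ Finset.Icc 1 (2*k), x) * 2 = 2*k*(2*k+1) := by
  have h1 : ∑ x ∈ Finset.Icc 1 (2*k), x = ∑ x ∈ Finset.range (2*k+1), x := by
    rw [Finset.range_eq_Ico, ← Finset.Ico_add_one_right_eq_Icc]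
    rw [← Finset.sum_Ico_consecutive (fun x => x) (Nat.zero_le 1) (by omega)]
    simp
  rw [h1, Finset.sum_range_id_mul_two, Nat.add_sub_cancel]; ring

/-- If `𝓖` picks one set from each complementary pair of middle-sum `k`-sets of `[2k]`
(with `k` even), then the downward closure of `𝓖` is intersecting. -/
theorem stmt11 (k : ℕ) (hk : Even k) (𝓖 : Finset (Finset ℕ))
    (hsub : ∀ G ∈ 𝓖, G ∈ ground (2*k) k ∧ 2 * ∑ x ∈ G, x = k * (2*k+1))
    (hone : ∀ F ∈ ground (2*k) k, 2 * ∑ x ∈ F, x = k * (2*k+1) →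
      Xor' (F ∈ 𝓖) ((Finset.Icc 1 (2*k) \ F) ∈ 𝓖)) :
    Intersecting' {H : Finset ℕ | H ∈ ground (2*k) k ∧ ∃ G ∈ 𝓖, lcLE k H G} := by
  rintro H1 ⟨hg1, G1, hG1, hlc1⟩ H2 ⟨hg2, G2, hG2, hlc2⟩
  by_contra hne
  rw [Finset.not_nonempty_iff_eq_empty, ← Finset.disjoint_iff_inter_eq_empty] at hne
  rw [ground, Finset.mem_powersetCard] at hg1 hg2
  obtain ⟨hs1, hc1⟩ := hg1
  obtain ⟨hs2, hc2⟩ := hg2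
  have hcard : (Finset.Icc 1 (2*k)).card = 2*k := by
    rw [Nat.card_Icc]; omega
  have hu : H1 ∪ H2 = Finset.Icc 1 (2*k) := by
    apply Finset.eq_of_subset_of_card_le (Finset.union_subset hs1 hs2)
    rw [hcard, Finset.card_union_of_disjoint hne, hc1, hc2]; omega
  have hH2eq : Finset.Icc 1 (2*k) \ H1 = H2 := by
    rw [← hu, Finset.union_sdiff_cancel_left hne]
  have hsum12 : ∑ x ∈ H1, x + ∑ x ∈ H2, x = ∑ x ∈ Finset.Icc 1 (2*k), x := by
    rw [← hu, Finset.sum_union hne]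
  have hgauss : (∑ x ∈ Finset.Icc 1 (2*k), x) * 2 = 2*(k*(2*k+1)) := by
    rw [gauss_icc']; ring
  have hle1 := lc_sum_le' hlc1
  have hle2 := lc_sum_le' hlc2
  obtain ⟨hG1g, hG1s⟩ := hsub G1 hG1
  obtain ⟨hG2g, hG2s⟩ := hsub G2 hG2
  have heq1 : H1 = G1 := lc_eq_of_sum_le' hlc1 (by generalize k*(2*k+1) = m at hG1s hG2s hgauss; omega)
  have heq2 : H2 = G2 := lc_eq_of_sum_le' hlc2 (by generalize k*(2*k+1) = m at hG1s hG2s hgauss; omega)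
  have hxor := hone G1 hG1g hG1s
  have hcomp : Finset.Icc 1 (2*k) \ G1 ∈ 𝓖 := by
    rw [← heq1, hH2eq, heq2]; exact hG2
  rcases hxor with ⟨_, h⟩ | ⟨_, h⟩
  · exact h hcomp
  · exact h hG1
end

section
/- Let n ≥ 3k^3·C(2k,k) and i ∈ [k], and define ω_i : [n] → ℝ≥0 by ω_i(j) = 0 if j < i and ω_i(j) = 1 otherwise; extend ω_i multiplicatively to sets and additively to families. Then for every j ∈ [k] with j ≠ i, ω_i(⟨j⟩) < ω_i(⟨i⟩), where ⟨ℓ⟩ := { F ∈ ([n] choose k) : |F ∩ [2ℓ−1]| ≥ ℓ }. -/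
open Finset

lemma chooseBotMono (m : ℕ) : ∀ s r, r ≤ s → 2*s ≤ m → m.choose r ≤ m.choose s := by
  intro s
  induction s with
  | zero => intro r hr _; interval_cases r; rfl
  | succ t ih =>
    intro r hr hm
    rcases Nat.lt_or_ge r (t+1) with h | h
    · have h1 : m.choose r ≤ m.choose t := ih r (by omega) (by omega)
      have h2 : m.choose t ≤ m.choose (t+1) := by
        have e := Nat.choose_succ_right_eq m t
        have key : m.choose t * (t+1) ≤ m.choose (t+1) * (t+1) := by
          rw [e]; exact Nat.mul_le_mul_left _ (by omega)
        exact Nat.le_of_mul_le_mul_right key (Nat.succ_pos t)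
      exact le_trans h1 h2
    · have : r = t + 1 := by omega
      rw [this]

lemma weightProd (i : ℕ) (F : Finset ℕ) :
    (∏ x ∈ F, (if x < i then (0:NNReal) else 1))
      = if ∀ x ∈ F, ¬ x < i then 1 else 0 := by
  by_cases h : ∀ x ∈ F, ¬ x < i
  · rw [if_pos h]; exact Finset.prod_eq_one fun x hx => if_neg (h x hx)
  · rw [if_neg h]
    push_neg at h
    obtain ⟨x, hx, hxi⟩ := h
    exact Finset.prod_eq_zero hx (if_pos hxi)

lemma lowerBound (n k i : ℕ) (h1 : 1 ≤ i) (hik : i ≤ k) (hkn : 2*k ≤ n) :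
    (n - 2*i + 1).choose (k - i)
      ≤ ((canonical n k i).filter (fun F => ∀ x ∈ F, ¬ x < i)).card := by
  have hcard : ((Finset.Icc (2*i) n).powersetCard (k - i)).card = (n - 2*i + 1).choose (k - i) := by
    rw [Finset.card_powersetCard, Nat.card_Icc]
    congr 1
    omega
  rw [← hcard]
  apply Finset.card_le_card_of_injOn (fun G => Finset.Icc i (2*i-1) ∪ G)
  · intro G hG
    rw [Finset.mem_coe, Finset.mem_powersetCard] at hG
    obtain ⟨hGs, hGc⟩ := hG
    have hGmem : ∀ x ∈ G, 2*i ≤ x ∧ x ≤ n := by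
      intro x hx
      have := hGs hx
      rw [Finset.mem_Icc] at this
      exact this
    have hdisj : Disjoint (Finset.Icc i (2*i-1)) G := by
      rw [Finset.disjoint_left]
      intro x hx hxG
      rw [Finset.mem_Icc] at hx
      have := hGmem x hxG
      omega
    rw [Finset.mem_coe, Finset.mem_filter]
    constructor
    · rw [canonical, Finset.mem_filter]
      constructor
      · rw [ground, Finset.mem_powersetCard]
        constructor
        · intro x hx
          rw [Finset.mem_union] at hx
          rw [Finset.mem_Icc]
          rcases hx with hx | hx
          · rw [Finset.mem_Icc] at hx; omega
          · have := hGmem x hx; omega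
        · rw [Finset.card_union_of_disjoint hdisj, hGc, Nat.card_Icc]
          omega
      · have hsub : Finset.Icc i (2*i-1) ⊆ (Finset.Icc i (2*i-1) ∪ G) ∩ Finset.Icc 1 (2*i-1) := by
          intro x hx
          rw [Finset.mem_inter, Finset.mem_union]
          refine ⟨Or.inl hx, ?_⟩
          rw [Finset.mem_Icc] at hx ⊢
          omega
        calc i = (Finset.Icc i (2*i-1)).card := by rw [Nat.card_Icc]; omega
          _ ≤ _ := Finset.card_le_card hsub
    · intro x hx
      rw [Finset.mem_union] at hx
      rcases hx with hx | hx
      · rw [Finset.mem_Icc] at hx; omega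
      · have := hGmem x hx; omega
  · intro G1 hG1 G2 hG2 heq
    rw [Finset.mem_coe, Finset.mem_powersetCard] at hG1 hG2
    have d : ∀ G : Finset ℕ, G ⊆ Finset.Icc (2*i) n → Disjoint (Finset.Icc i (2*i-1)) G := by
      intro G hGs
      rw [Finset.disjoint_left]
      intro x hx hxG
      rw [Finset.mem_Icc] at hx
      have := hGs hxG
      rw [Finset.mem_Icc] at this
      omega
    have e1 := Finset.union_sdiff_cancel_left (d G1 hG1.1)
    have e2 := Finset.union_sdiff_cancel_left (d G2 hG2.1)
    rw [← e1, ← e2]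
    simp only at heq
    rw [heq]

lemma upperBound (n k i j : ℕ) (h1 : 1 ≤ i) (hij : i < j) (hjk : j ≤ k) (hkn : 2*k ≤ n) :
    ((canonical n k j).filter (fun F => ∀ x ∈ F, ¬ x < i)).card
      ≤ 2^(2*j - i) * (n - 2*j + 1).choose (k - j) := by
  classical
  set I : Finset ℕ := Finset.Icc i (2*j-1) with hI
  set P : Finset (Finset ℕ) := I.powerset.filter (fun A => j ≤ A.card) with hP
  set T : Finset ((_ : Finset ℕ) × Finset ℕ) :=
    P.sigma (fun A => (Finset.Icc (2*j) n).powersetCard (k - A.card)) with hT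
  have step1 : ((canonical n k j).filter (fun F => ∀ x ∈ F, ¬ x < i)).card ≤ T.card := by
    apply Finset.card_le_card_of_injOn (fun F => (⟨F ∩ I, F \ I⟩ : (_ : Finset ℕ) × Finset ℕ))
    · intro F hF
      rw [Finset.mem_coe, Finset.mem_filter] at hF
      obtain ⟨hFc, hFi⟩ := hF
      rw [canonical, Finset.mem_filter, ground, Finset.mem_powersetCard] at hFc
      obtain ⟨⟨hFs, hFcard⟩, hFj⟩ := hFc
      have hFmem : ∀ x ∈ F, i ≤ x ∧ x ≤ n := by
        intro x hx
        have h2 := hFs hx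
        rw [Finset.mem_Icc] at h2
        have := hFi x hx
        omega
      have hAcard : j ≤ (F ∩ I).card := by
        refine le_trans hFj (Finset.card_le_card ?_)
        intro x hx
        rw [Finset.mem_inter, Finset.mem_Icc] at hx
        rw [Finset.mem_inter, hI, Finset.mem_Icc]
        have := hFmem x hx.1
        exact ⟨hx.1, by omega⟩
      rw [Finset.mem_coe, Finset.mem_sigma]
      constructor
      · rw [hP, Finset.mem_filter, Finset.mem_powerset]
        exact ⟨Finset.inter_subset_right, hAcard⟩
      · rw [Finset.mem_powersetCard]
        constructor
        · intro x hx
          rw [Finset.mem_sdiff] at hx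
          obtain ⟨hxF, hxI⟩ := hx
          have := hFmem x hxF
          rw [hI, Finset.mem_Icc] at hxI
          rw [Finset.mem_Icc]
          omega
        · dsimp only
          have h3 := Finset.card_sdiff_add_card_inter F I
          omega
    · intro F1 hF1 F2 hF2 heq
      have e1 : F1 ∩ I = F2 ∩ I := congrArg Sigma.fst heq
      have e2' : F1 \ I = F2 \ I := by
        have := congrArg (fun p : (_ : Finset ℕ) × Finset ℕ => p.snd) heq
        simpa using this
      calc F1 = F1 \ I ∪ F1 ∩ I := (Finset.sdiff_union_inter F1 I).symm
        _ = F2 \ I ∪ F2 ∩ I := by rw [e1, e2']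
        _ = F2 := Finset.sdiff_union_inter F2 I
  refine le_trans step1 ?_
  rw [hT, Finset.card_sigma]
  have hIcc : (Finset.Icc (2*j) n).card = n - 2*j + 1 := by
    rw [Nat.card_Icc]; omega
  calc ∑ A ∈ P, ((Finset.Icc (2*j) n).powersetCard (k - A.card)).card
      ≤ ∑ A ∈ P, (n - 2*j + 1).choose (k - j) := by
        apply Finset.sum_le_sum
        intro A hA
        rw [Finset.card_powersetCard, hIcc]
        rw [hP, Finset.mem_filter] at hA
        exact chooseBotMono _ (k - j) (k - A.card) (by omega) (by omega)
    _ = P.card * (n - 2*j + 1).choose (k - j) := by rw [Finset.sum_const, smul_eq_mul]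
    _ ≤ 2^(2*j - i) * (n - 2*j + 1).choose (k - j) := by
        apply Nat.mul_le_mul_right
        calc P.card ≤ I.powerset.card := Finset.card_le_card (Finset.filter_subset _ _)
          _ = 2^(2*j - i) := by
              rw [Finset.card_powerset, hI, Nat.card_Icc]
              congr 1
              omega

/-- Under the 0/1 weight `ω_i`, the canonical family `⟨i⟩` has strictly
largest weight among canonical families. -/
theorem stmt18 (n k i j : ℕ) (hn : 3 * k^3 * Nat.choose (2*k) k ≤ n)
    (hi : i ∈ Finset.Icc 1 k) (hj : j ∈ Finset.Icc 1 k) (hne : j ≠ i) :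
    ∑ F ∈ canonical n k j, ∏ x ∈ F, (if x < i then (0 : NNReal) else 1)
      < ∑ F ∈ canonical n k i, ∏ x ∈ F, (if x < i then (0 : NNReal) else 1) := by
  classical
  rw [Finset.mem_Icc] at hi hj
  obtain ⟨hi1, hik⟩ := hi
  obtain ⟨hj1, hjk⟩ := hj
  have hw : ∀ l, ∑ F ∈ canonical n k l, ∏ x ∈ F, (if x < i then (0:NNReal) else 1)
      = (((canonical n k l).filter (fun F => ∀ x ∈ F, ¬ x < i)).card : NNReal) := by
    intro l
    rw [← Finset.sum_boole]
    exact Finset.sum_congr rfl fun F _ => weightProd i F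
  rw [hw, hw, Nat.cast_lt]
  set C := Nat.choose (2*k) k with hC
  have hC1 : 1 ≤ C := Nat.choose_pos (by omega)
  have hkcube : k ≤ k^3 := Nat.le_self_pow (by norm_num) k
  have hkn : 2*k ≤ n := by
    have h2 : 3*k^3 ≤ 3*k^3*C := Nat.le_mul_of_pos_right _ hC1
    omega
  rcases lt_or_gt_of_ne hne with hlt | hgt
  · -- j < i : left side is zero
    have hempty : ((canonical n k j).filter (fun F => ∀ x ∈ F, ¬ x < i)) = ∅ := by
      apply Finset.eq_empty_of_forall_notMem
      intro F hF
      rw [Finset.mem_filter] at hF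
      obtain ⟨hFc, hFi⟩ := hF
      rw [canonical, Finset.mem_filter] at hFc
      obtain ⟨-, hFj⟩ := hFc
      have hsub : F ∩ Finset.Icc 1 (2*j-1) ⊆ Finset.Icc i (2*j-1) := by
        intro x hx
        rw [Finset.mem_inter, Finset.mem_Icc] at hx
        rw [Finset.mem_Icc]
        have := hFi x hx.1
        omega
      have hle := Finset.card_le_card hsub
      rw [Nat.card_Icc] at hle
      omega
    rw [hempty, Finset.card_empty]
    have hpos : 0 < (n - 2*i + 1).choose (k - i) := Nat.choose_pos (by omega)
    exact lt_of_lt_of_le hpos (lowerBound n k i hi1 hik hkn)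
  · -- i < j
    have hk2 : 2 ≤ k := by omega
    -- numeric bound : k * 4^k + 3*k ≤ n
    have hq : 4^k ≤ (2*k+1) * C := Nat.four_pow_le_two_mul_add_one_mul_central_binom k
    have key : k*(2*k+1)*C + 3*k ≤ 3*k^3*C := by
      have a1 : 3*k ≤ 3*k*C := Nat.le_mul_of_pos_right _ hC1
      have a2 : k*(2*k+1)*C + 3*k*C = (k*(2*k+1)+3*k)*C := by ring
      have a3 : k*(2*k+1)+3*k ≤ 3*k^3 := by nlinarith [hk2]
      have a4 : (k*(2*k+1)+3*k)*C ≤ 3*k^3*C := Nat.mul_le_mul_right _ a3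
      omega
    have hbig : k * 4^k + 3*k ≤ n := by
      have h1 : k * 4^k ≤ k * ((2*k+1) * C) := Nat.mul_le_mul_left k hq
      have h2 : k * ((2*k+1) * C) = k*(2*k+1)*C := by ring
      omega
    -- the main numeric inequality
    have hnum : 4^k * (k - i) < (n - 2*i + 1) - (k - i) + 1 := by
      have ht4 : 4 ≤ 4^k := by
        calc (4:ℕ) = 4^1 := (pow_one 4).symm
          _ ≤ 4^k := Nat.pow_le_pow_right (by norm_num) (by omega)
      have hmono : 4^k * (k - i) ≤ 4^k * (k-1) := Nat.mul_le_mul_left _ (by omega)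
      have hkt : 4^k * (k-1) + 4^k * 1 = 4^k * k := by
        rw [← Nat.mul_add]
        congr 1
        omega
      have hbig' : 4^k * k + 3*k ≤ n := by rw [mul_comm]; exact hbig
      omega
    have hfin : 4^k * (n - 2*i + 1).choose (k - i - 1) < (n - 2*i + 1).choose (k - i) := by
      set m := n - 2*i + 1 with hm
      set r := k - i with hr
      have hr1 : 1 ≤ r := by omega
      have hrm : r ≤ m := by omega
      have e := Nat.choose_succ_right_eq m (r-1)
      rw [show r-1+1 = r by omega] at e
      have pos : 0 < m.choose (r-1) := Nat.choose_pos (by omega)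
      have hlt2 : 4^k * r < m - (r-1) := by omega
      have hmul : (4^k * m.choose (r-1)) * r < m.choose r * r := by
        rw [e]
        calc (4^k * m.choose (r-1)) * r = m.choose (r-1) * (4^k * r) := by ring
          _ < m.choose (r-1) * (m-(r-1)) := by
              exact mul_lt_mul_of_pos_left hlt2 pos
      exact lt_of_mul_lt_mul_right hmul (Nat.zero_le r)
    calc ((canonical n k j).filter (fun F => ∀ x ∈ F, ¬ x < i)).card
        ≤ 2^(2*j - i) * (n - 2*j + 1).choose (k - j) :=
          upperBound n k i j hi1 hgt hjk hkn
      _ ≤ 4^k * (n - 2*i + 1).choose (k - i - 1) := by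
          apply Nat.mul_le_mul
          · calc 2^(2*j - i) ≤ 2^(2*k) := Nat.pow_le_pow_right (by norm_num) (by omega)
              _ = 4^k := by rw [pow_mul]; norm_num
          · calc (n - 2*j + 1).choose (k - j) ≤ (n - 2*i + 1).choose (k - j) :=
                  Nat.choose_le_choose _ (by omega)
              _ ≤ (n - 2*i + 1).choose (k - i - 1) :=
                  chooseBotMono _ (k - i - 1) (k - j) (by omega) (by omega)
      _ < (n - 2*i + 1).choose (k - i) := hfin
      _ ≤ _ := lowerBound n k i hi1 hik hkn
end
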